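/- For all k, l > 0 and all T > 0, \sup_{(x,t) \in (0,\pi/2) \times (0,T)} |u_k(x,t) - u_l(x,t)| \leq \sup_{(x,t) \in (0,\pi/2) \times (0,T)} |f_k(x,t) - f_l(x,t)| + \sup_{t \in (0,T)} |d_k(t) - d_l(t)|, where u_k(x,t) = k \sin t \sin x, f_k(x,t) = \sqrt{2} k \sin x \cos(t-\pi/4), and d_k(t) = k \sin t. -/
import Mathlib


open Real

/-- RLES estimate for the explicit family `u_k(x,t) = k sin t sin x`,
`f_k(x,t) = √2 k sin x cos(t-π/4)`, `d_k(t) = k sin t`: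
`sup |u_k - u_l| ≤ sup |f_k - f_l| + sup |d_k - d_l|` over `(0,π/2)×(0,T)`. -/
theorem stmt2 (k l T : ℝ) (hk : 0 < k) (hl : 0 < l) (hT : 0 < T) :
    sSup {y : ℝ | ∃ x ∈ Set.Ioo (0 : ℝ) (π / 2), ∃ t ∈ Set.Ioo (0 : ℝ) T,
        y = |k * Real.sin t * Real.sin x - l * Real.sin t * Real.sin x|}
      ≤ sSup {y : ℝ | ∃ x ∈ Set.Ioo (0 : ℝ) (π / 2), ∃ t ∈ Set.Ioo (0 : ℝ) T,
          y = |Real.sqrt 2 * k * Real.sin x * Real.cos (t - π / 4)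
                - Real.sqrt 2 * l * Real.sin x * Real.cos (t - π / 4)|}
        + sSup {y : ℝ | ∃ t ∈ Set.Ioo (0 : ℝ) T, y = |k * Real.sin t - l * Real.sin t|} := by
  set B := {y : ℝ | ∃ x ∈ Set.Ioo (0 : ℝ) (π / 2), ∃ t ∈ Set.Ioo (0 : ℝ) T,
          y = |Real.sqrt 2 * k * Real.sin x * Real.cos (t - π / 4)
                - Real.sqrt 2 * l * Real.sin x * Real.cos (t - π / 4)|} with hB
  set C := {y : ℝ | ∃ t ∈ Set.Ioo (0 : ℝ) T, y = |k * Real.sin t - l * Real.sin t|} with hC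
  have hCbdd : BddAbove C := by
    refine ⟨|k - l|, ?_⟩
    rintro y ⟨t, ht, rfl⟩
    have : k * Real.sin t - l * Real.sin t = (k - l) * Real.sin t := by ring
    rw [this, abs_mul]
    calc |k - l| * |Real.sin t| ≤ |k - l| * 1 :=
          mul_le_mul_of_nonneg_left (Real.abs_sin_le_one t) (abs_nonneg _)
      _ = |k - l| := mul_one _
  have hBnn : (0:ℝ) ≤ sSup B := Real.sSup_nonneg (by rintro y ⟨x, hx, t, ht, rfl⟩; exact abs_nonneg _)
  have hCnn : (0:ℝ) ≤ sSup C := Real.sSup_nonneg (by rintro y ⟨t, ht, rfl⟩; exact abs_nonneg _)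
  refine Real.sSup_le ?_ (by linarith)
  rintro y ⟨x, hx, t, ht, rfl⟩
  have h1 : |k * Real.sin t * Real.sin x - l * Real.sin t * Real.sin x|
      ≤ |k * Real.sin t - l * Real.sin t| := by
    have : k * Real.sin t * Real.sin x - l * Real.sin t * Real.sin x
        = (k * Real.sin t - l * Real.sin t) * Real.sin x := by ring
    rw [this, abs_mul]
    calc |k * Real.sin t - l * Real.sin t| * |Real.sin x|
        ≤ |k * Real.sin t - l * Real.sin t| * 1 :=
          mul_le_mul_of_nonneg_left (Real.abs_sin_le_one x) (abs_nonneg _)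
      _ = _ := mul_one _
  have h2 : |k * Real.sin t - l * Real.sin t| ≤ sSup C :=
    le_csSup hCbdd ⟨t, ht, rfl⟩
  linarith
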